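/- arXiv:1310.5898 — 2 statements merged into one kernel-verified Lean document; each statement's English description precedes it below -/
import Mathlib

section
/- Let G be a 3-regular tree on a countable vertex set V, and let k ≥ 1 be an integer. Then there exists a partition of V into finite sets, each of which induces in G a path on k+1 vertices (i.e., V admits a covering by k-chains in which every vertex belongs to exactly one k-chain). -/
open SimpleGraph Walk

namespace ChainCoverAux

open scoped Classical

variable {V : Type*} {G : SimpleGraph V}

noncomputable def thePath (ht : G.IsTree) (r v : V) : G.Walk r v :=
  (ht.existsUnique_path r v).exists.choose

lemma thePath_isPath (ht : G.IsTree) (r v : V) : (thePath ht r v).IsPath :=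
  (ht.existsUnique_path r v).exists.choose_spec

lemma thePath_unique (ht : G.IsTree) {r v : V} (q : G.Walk r v) (hq : q.IsPath) :
    q = thePath ht r v :=
  (ht.existsUnique_path r v).unique hq (thePath_isPath ht r v)

noncomputable def depth (ht : G.IsTree) (r v : V) : ℕ := (thePath ht r v).length

noncomputable def par (ht : G.IsTree) (r v : V) : V := (thePath ht r v).reverse.getVert 1

lemma thePath_self (ht : G.IsTree) (r : V) : thePath ht r r = Walk.nil :=
  (thePath_unique ht Walk.nil IsPath.nil).symm

lemma depth_self (ht : G.IsTree) (r : V) : depth ht r r = 0 := by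
  rw [depth, thePath_self]; rfl

lemma eq_self_of_depth_zero (ht : G.IsTree) {r v : V} (h : depth ht r v = 0) : r = v :=
  Walk.eq_of_length_eq_zero h

lemma par_self (ht : G.IsTree) (r : V) : par ht r r = r := by
  rw [par, thePath_self]; rfl

lemma par_eq_of_concat (ht : G.IsTree) {r u v : V} {q : G.Walk r u} {h : G.Adj u v}
    (he : thePath ht r v = q.concat h) : par ht r v = u := by
  rw [par, he, reverse_concat, getVert_cons_succ, getVert_zero]

lemma exists_concat (ht : G.IsTree) {r v : V} (hv : v ≠ r) :
    ∃ h : G.Adj (par ht r v) v,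
      thePath ht r v = (thePath ht r (par ht r v)).concat h := by
  obtain ⟨u, hadj, q, hq⟩ := exists_eq_cons_of_ne hv (thePath ht r v).reverse
  have h1 : thePath ht r v = q.reverse.concat hadj.symm := by
    rw [← reverse_reverse (thePath ht r v), hq, reverse_cons, concat_eq_append]
  have hqp : q.reverse.IsPath := by
    have : (thePath ht r v).reverse.IsPath := (thePath_isPath ht r v).reverse
    rw [hq] at this
    exact this.of_cons.reverse
  have h2 : q.reverse = thePath ht r u := thePath_unique ht _ hqp
  have h3 : par ht r v = u := by
    rw [h2] at h1; exact par_eq_of_concat ht h1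
  rw [h3]
  refine ⟨hadj.symm, ?_⟩
  rw [h1, h2, concat_eq_append]

lemma adj_par (ht : G.IsTree) {r v : V} (hv : v ≠ r) : G.Adj (par ht r v) v :=
  (exists_concat ht hv).choose

lemma depth_par (ht : G.IsTree) {r v : V} (hv : v ≠ r) :
    depth ht r v = depth ht r (par ht r v) + 1 := by
  obtain ⟨h, he⟩ := exists_concat ht hv
  rw [depth, depth, he, length_concat]

lemma isPath_concat {u v w : V} {p : G.Walk u v} (hp : p.IsPath) (h : G.Adj v w)
    (hw : w ∉ p.support) : (p.concat h).IsPath := by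
  have : (p.concat h).reverse.IsPath := by
    rw [reverse_concat]
    exact IsPath.cons hp.reverse (by rwa [support_reverse, List.mem_reverse])
  simpa only [reverse_reverse] using this.reverse

lemma par_cases (ht : G.IsTree) {r u v : V} (h : G.Adj u v) :
    par ht r v = u ∨ par ht r u = v := by
  by_cases hm : v ∈ (thePath ht r u).support
  · right
    have hdrop : ((thePath ht r u).dropUntil v hm).IsPath :=
      (thePath_isPath ht r u).dropUntil hm
    have hsingle : (Walk.cons h.symm Walk.nil : G.Walk v u).IsPath := by
      simp [h.ne']
    have hux := (ht.existsUnique_path v u).unique hdrop hsingle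
    have hsp : thePath ht r u = ((thePath ht r u).takeUntil v hm).concat h.symm := by
      conv_lhs => rw [← take_spec _ hm]
      rw [hux, concat_eq_append]
    exact par_eq_of_concat ht hsp
  · left
    have hpath : ((thePath ht r u).concat h).IsPath :=
      isPath_concat (thePath_isPath ht r u) h hm
    exact par_eq_of_concat ht (thePath_unique ht _ hpath).symm

lemma exists_child (ht : G.IsTree) (hreg : ∀ v : V, (G.neighborSet v).ncard = 3) (r v : V) :
    ∃ u, G.Adj v u ∧ par ht r u = v := by
  have h3 := hreg v
  have hfin : (G.neighborSet v).Finite := Set.finite_of_ncard_ne_zero (by omega)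
  have hne : ((G.neighborSet v) \ {par ht r v}).Nonempty := by
    by_contra hcon
    rw [Set.not_nonempty_iff_eq_empty, Set.diff_eq_empty] at hcon
    have := Set.ncard_le_ncard hcon (Set.finite_singleton _)
    simp [h3] at this
  obtain ⟨u, hu, hnp⟩ := hne
  have hadj : G.Adj v u := hu
  simp only [Set.mem_singleton_iff] at hnp
  rcases par_cases ht (r := r) hadj with h1 | h2
  · exact ⟨u, hadj, h1⟩
  · exact absurd h2 (Ne.symm hnp)

variable (ht : G.IsTree) (hreg : ∀ v : V, (G.neighborSet v).ncard = 3) (r : V)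

noncomputable def child (ht : G.IsTree) (hreg : ∀ v : V, (G.neighborSet v).ncard = 3) (r : V) (v : V) : V := (exists_child ht hreg r v).choose

lemma child_adj (v : V) : G.Adj v (child ht hreg r v) :=
  (exists_child ht hreg r v).choose_spec.1

lemma par_child (v : V) : par ht r (child ht hreg r v) = v :=
  (exists_child ht hreg r v).choose_spec.2

lemma child_ne_root (v : V) : child ht hreg r v ≠ r := by
  intro h
  have h1 := par_child ht hreg r v
  rw [h, par_self] at h1
  have := child_adj ht hreg r v
  rw [h, ← h1] at this
  exact G.irrefl this

lemma depth_child (v : V) :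
    depth ht r (child ht hreg r v) = depth ht r v + 1 := by
  rw [depth_par ht (child_ne_root ht hreg r v), par_child]

lemma child_injective : Function.Injective (child ht hreg r) := by
  intro a b hab
  rw [← par_child ht hreg r a, ← par_child ht hreg r b, hab]

noncomputable def phi (ht : G.IsTree) (hreg : ∀ v : V, (G.neighborSet v).ncard = 3) (r : V) (k : ℕ) (v : V) : ℕ :=
  if h : v = r then 0
  else if child ht hreg r (par ht r v) = v ∧ phi ht hreg r k (par ht r v) < k
    then phi ht hreg r k (par ht r v) + 1 else 0
termination_by depth ht r v
decreasing_by
  all_goals { rw [depth_par ht h]; omega }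

lemma phi_self (k : ℕ) : phi ht hreg r k r = 0 := by rw [phi]; simp

lemma phi_lt (k : ℕ) (hk : 1 ≤ k) (v : V) : phi ht hreg r k v ≤ k := by
  rw [phi]
  split_ifs with h1 h2
  · omega
  · omega
  · omega

lemma phi_child_eq (k : ℕ) {v : V} (h : phi ht hreg r k v < k) :
    phi ht hreg r k (child ht hreg r v) = phi ht hreg r k v + 1 := by
  rw [phi]
  rw [dif_neg (child_ne_root ht hreg r v)]
  rw [if_pos]
  · rw [par_child]
  · rw [par_child]; exact ⟨rfl, h⟩

lemma phi_succ (k : ℕ) {v : V} {m : ℕ} (h : phi ht hreg r k v = m + 1) :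
    child ht hreg r (par ht r v) = v ∧ phi ht hreg r k (par ht r v) = m ∧ m < k := by
  rw [phi] at h
  split_ifs at h with h1 h2
  · exact ⟨h2.1, by omega, by omega⟩

lemma phi_iterate (k : ℕ) {v : V} (hv : phi ht hreg r k v = 0) :
    ∀ j ≤ k, phi ht hreg r k ((child ht hreg r)^[j] v) = j := by
  intro j hj
  induction j with
  | zero => simpa using hv
  | succ n ih =>
    rw [Function.iterate_succ_apply', phi_child_eq]
    · rw [ih (by omega)]
    · rw [ih (by omega)]; omega

lemma depth_iterate (j : ℕ) (v : V) :
    depth ht r ((child ht hreg r)^[j] v) = depth ht r v + j := by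
  induction j with
  | zero => simp
  | succ n ih => rw [Function.iterate_succ_apply', depth_child, ih]; omega

lemma cover_exists (k : ℕ) (v : V) :
    ∃ u, phi ht hreg r k u = 0 ∧ (child ht hreg r)^[phi ht hreg r k v] u = v := by
  generalize hn : phi ht hreg r k v = n
  induction n generalizing v with
  | zero => exact ⟨v, hn, rfl⟩
  | succ m ih =>
    obtain ⟨hc, hm, _⟩ := phi_succ ht hreg r k hn
    obtain ⟨u, hu0, hui⟩ := ih (par ht r v) hm
    exact ⟨u, hu0, by rw [Function.iterate_succ_apply', hui, hc]⟩

end ChainCoverAux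

/-- `p` parametrizes an induced path in `G`: it is injective, and two vertices on it are
adjacent in `G` iff they are consecutive. -/
def IsInducedPathParam {V : Type*} (G : SimpleGraph V) {n : ℕ} (p : Fin n → V) : Prop :=
  Function.Injective p ∧
    ∀ i j : Fin n, G.Adj (p i) (p j) ↔ (i.val + 1 = j.val ∨ j.val + 1 = i.val)

/-- A 3-regular tree: connected, acyclic, every vertex has exactly 3 neighbours. -/
def IsThreeRegularTree {V : Type*} (G : SimpleGraph V) : Prop :=
  G.Connected ∧ G.IsAcyclic ∧ ∀ v : V, (G.neighborSet v).ncard = 3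

/-- Every 3-regular tree on a countable vertex set admits, for each `k ≥ 1`, a partition of
its vertex set into `k`-chains, i.e. induced paths on `k + 1` vertices. -/
theorem covering_by_chains_exists {V : Type*} [Countable V] (G : SimpleGraph V)
    (hG : IsThreeRegularTree G) (k : ℕ) (hk : 1 ≤ k) :
    ∃ (ι : Type) (p : ι → Fin (k + 1) → V),
      (∀ i, IsInducedPathParam G (p i)) ∧
      (∀ v : V, ∃! i : ι, v ∈ Set.range (p i)) := by
  classical
  obtain ⟨hconn, hacyc, hreg⟩ := hG
  have ht : G.IsTree := ⟨hconn, hacyc⟩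
  have hne : Nonempty V := hconn.nonempty
  obtain ⟨r⟩ := hne
  obtain ⟨g, hg⟩ := Countable.exists_injective_nat V
  set c : V → V := ChainCoverAux.child ht hreg r with hc
  set φ : V → ℕ := ChainCoverAux.phi ht hreg r k with hφ
  have hdep : ∀ (j : ℕ) (v : V),
      ChainCoverAux.depth ht r (c^[j] v) = ChainCoverAux.depth ht r v + j :=
    fun j v => ChainCoverAux.depth_iterate ht hreg r j v
  have hadjc : ∀ v : V, G.Adj v (c v) := fun v => ChainCoverAux.child_adj ht hreg r v
  refine ⟨{n : ℕ // ∃ v : V, φ v = 0 ∧ g v = n},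
    fun i j => c^[j.val] i.2.choose, ?_, ?_⟩
  · intro i
    constructor
    · intro a b hab
      dsimp only at hab
      have := hdep a.val i.2.choose
      rw [hab, hdep b.val i.2.choose] at this
      exact Fin.ext (by omega)
    · intro a b
      constructor
      · intro h
        dsimp only at h
        rcases ChainCoverAux.par_cases ht (r := r) h with h1 | h2
        · left
          have hbr : c^[b.val] i.2.choose ≠ r := by
            intro hr
            rw [hr, ChainCoverAux.par_self] at h1
            rw [hr, ← h1] at h
            exact G.irrefl h
          have hd := ChainCoverAux.depth_par ht hbr
          rw [h1] at hd
          rw [hdep a.val i.2.choose, hdep b.val i.2.choose] at hd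
          omega
        · right
          have har : c^[a.val] i.2.choose ≠ r := by
            intro hr
            rw [hr, ChainCoverAux.par_self] at h2
            rw [hr, ← h2] at h
            exact G.irrefl h.symm
          have hd := ChainCoverAux.depth_par ht har
          rw [h2] at hd
          rw [hdep a.val i.2.choose, hdep b.val i.2.choose] at hd
          omega
      · intro hab
        dsimp only
        rcases hab with hab | hab
        · have hb : c^[b.val] i.2.choose = c (c^[a.val] i.2.choose) := by
            rw [← hab, Function.iterate_succ_apply']
          rw [hb]
          exact hadjc _
        · have ha : c^[a.val] i.2.choose = c (c^[b.val] i.2.choose) := by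
            rw [← hab, Function.iterate_succ_apply']
          rw [ha]
          exact (hadjc _).symm
  · intro v
    obtain ⟨u, hu0, huv⟩ := ChainCoverAux.cover_exists ht hreg r k v
    have hφk : φ v ≤ k := ChainCoverAux.phi_lt ht hreg r k hk v
    have hinj : Function.Injective c := ChainCoverAux.child_injective ht hreg r
    refine ⟨⟨g u, u, hu0, rfl⟩, ?_, ?_⟩
    · have hdec : (⟨g u, u, hu0, rfl⟩ :
          {n : ℕ // ∃ v : V, φ v = 0 ∧ g v = n}).2.choose = u := by
        have := (⟨g u, u, hu0, rfl⟩ :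
          {n : ℕ // ∃ v : V, φ v = 0 ∧ g v = n}).2.choose_spec.2
        exact hg this
      have hmem : c^[φ v] ((⟨g u, ⟨u, hu0, rfl⟩⟩ :
          {n : ℕ // ∃ v : V, φ v = 0 ∧ g v = n}).2.choose) = v := by
        rw [hdec]; exact huv
      exact ⟨⟨φ v, by omega⟩, hmem⟩
    · intro i' hi'
      obtain ⟨j, hj⟩ := hi'
      dsimp only at hj
      have h0 : φ i'.2.choose = 0 := i'.2.choose_spec.1
      have hφj : φ v = j.val := by
        rw [← hj]
        exact ChainCoverAux.phi_iterate ht hreg r k h0 j.val (by omega)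
      have heq : c^[j.val] i'.2.choose = c^[j.val] u := by
        rw [hj, ← hφj]
        exact huv.symm
      have hu' : i'.2.choose = u := hinj.iterate j.val heq
      have : i'.1 = g u := by
        rw [← i'.2.choose_spec.2, hu']
      exact Subtype.ext this
end

section
/- Let x > 1 and z > 0 be real numbers, set y = x − √(4z(x²−1) + (z+1)²), and assume y ≥ z. Then the cross-ratio of the inner pair against the outer pair satisfies R(y−z, y+z; x−1, −(x−1)) = 2z(2x−2)/((x−z−1)² − y²) ≤ 1/(x−1). -/
/-- The cross-ratio `R(a,b;c,d) = −((b−a)(d−c))/((b−c)(d−a))`. -/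
noncomputable def crossR (a b c d : ℝ) : ℝ :=
  -((b - a) * (d - c)) / ((b - c) * (d - a))

/-- For `x > 1`, `z > 0`, `y = x − √(4z(x²−1) + (z+1)²)` with `y ≥ z`, the cross-ratio of the
inner pair against the outer pair satisfies
`R(y−z, y+z; x−1, −(x−1)) = 2z(2x−2)/((x−z−1)² − y²) ≤ 1/(x−1)`. -/
theorem crossR_inner_outer (x y z : ℝ) (hx : 1 < x) (hz : 0 < z)
    (hy : y = x - Real.sqrt (4 * z * (x ^ 2 - 1) + (z + 1) ^ 2)) (hyz : z ≤ y) :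
    crossR (y - z) (y + z) (x - 1) (-(x - 1)) =
        2 * z * (2 * x - 2) / ((x - z - 1) ^ 2 - y ^ 2) ∧
      2 * z * (2 * x - 2) / ((x - z - 1) ^ 2 - y ^ 2) ≤ 1 / (x - 1) := by
  set A : ℝ := 4 * z * (x ^ 2 - 1) + (z + 1) ^ 2 with hA
  have hAnn : 0 ≤ A := by rw [hA]; nlinarith [sq_nonneg (z + 1), mul_pos hz (show (0:ℝ) < x ^ 2 - 1 by nlinarith)]
  set s : ℝ := Real.sqrt A with hs
  have hs0 : 0 ≤ s := Real.sqrt_nonneg A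
  have hs2 : s ^ 2 = 4 * z * (x ^ 2 - 1) + (z + 1) ^ 2 := by
    rw [hs, Real.sq_sqrt hAnn, hA]
  have hys : y = x - s := hy
  -- constraint s ≤ x - z
  have hsle : s ≤ x - z := by linarith [hyz, hys.symm ▸ hyz]
  have hxz : 0 ≤ x - z := le_trans hs0 hsle
  -- key: x - 1 ≥ 2z(2x-1)
  have hkey : 2 * z * (2 * x - 1) ≤ x - 1 := by
    have h1 : s ^ 2 ≤ (x - z) ^ 2 := by nlinarith
    nlinarith [hs2, h1]
  -- s ≥ z + 1 + 4z(x-1)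
  have hst : z + 1 + 4 * z * (x - 1) ≤ s := by
    have ht0 : 0 ≤ z + 1 + 4 * z * (x - 1) := by nlinarith
    nlinarith [hs2, hs0, hkey, mul_nonneg hs0 ht0, sq_nonneg (s - (z + 1 + 4 * z * (x - 1))), mul_nonneg (mul_nonneg hz.le (sub_pos.mpr hx).le) (by linarith : (0:ℝ) ≤ x - 1 - 2 * z - 4 * z * (x - 1))]
  -- D = (x-z-1)^2 - y^2 is positive and ≥ 4z(x-1)^2 + 2x(s - t)
  have hD : (x - z - 1) ^ 2 - y ^ 2 = 2 * x * (s - z - 1) - 4 * z * (x ^ 2 - 1) := by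
    rw [hys]; nlinarith [hs2]
  have hDge : 4 * z * (x - 1) ^ 2 ≤ (x - z - 1) ^ 2 - y ^ 2 := by
    rw [hD]; nlinarith [hst]
  have hDpos : 0 < (x - z - 1) ^ 2 - y ^ 2 := by
    nlinarith [hDge, mul_pos hz (mul_pos (sub_pos.mpr hx) (sub_pos.mpr hx))]
  constructor
  · unfold crossR
    congr 1 <;> ring
  · rw [div_le_div_iff₀ hDpos (by linarith)]
    nlinarith [hDge]
end
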